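/- Let 0 < r < 1 and let A = λ[[1,a*],[b,ba*]] and B = μ[[1,x*],[y,yx*]] be elements of 𝒮_r with λ, μ ≠ 0. Then the unique nonzero eigenvalue of A is α = λ(1 + a*b), of B is β = μ(1 + x*y), and of AB is γ = λμ(1 + a*y)(1 + x*b), and |γ − αβ| ≤ (4r²/(1−r²)²)·|α|·|β|. -/

import Mathlib

open Matrix

/-- The `n × n` matrix `[[1, x*], [y, y x*]]` (with `n = m + 1`, indexed by
`Unit ⊕ Fin m`), where `x* ` denotes the conjugate-transpose row vector. -/
def srMat (m : ℕ) (x y : EuclideanSpace ℂ (Fin m)) :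
    Matrix (Unit ⊕ Fin m) (Unit ⊕ Fin m) ℂ :=
  Matrix.fromBlocks 1 (Matrix.of fun _ j => (starRingEnd ℂ) (x j))
    (Matrix.of fun i _ => y i) (Matrix.of fun i j => y i * (starRingEnd ℂ) (x j))

/-- The semigroup `𝒮_r = { λ [[1, x*], [y, y x*]] : ‖x‖, ‖y‖ < r, λ ∈ ℂ }`. -/
def srSet (m : ℕ) (r : ℝ) : Set (Matrix (Unit ⊕ Fin m) (Unit ⊕ Fin m) ℂ) :=
  {A | ∃ (x y : EuclideanSpace ℂ (Fin m)) (lam : ℂ),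
    ‖x‖ < r ∧ ‖y‖ < r ∧ A = lam • srMat m x y}


section Aux
noncomputable section
open Matrix Finset ComplexConjugate

namespace Sr
variable {m : ℕ}

def uV (y : EuclideanSpace ℂ (Fin m)) : (Unit ⊕ Fin m) → ℂ := Sum.elim 1 y
def wV (x : EuclideanSpace ℂ (Fin m)) : (Unit ⊕ Fin m) → ℂ := Sum.elim 1 fun i => conj (x i)

lemma srMat_eq (x y : EuclideanSpace ℂ (Fin m)) : srMat m x y = vecMulVec (uV y) (wV x) := by
  ext i j
  cases i <;> cases j <;>
    simp [srMat, vecMulVec, uV, wV, Matrix.one_apply]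

lemma dot_eq (x y : EuclideanSpace ℂ (Fin m)) :
    ∑ k, wV x k * uV y k = 1 + ∑ i, conj (x i) * y i := by
  simp [Fintype.sum_sum_type, uV, wV]

lemma vecMulVec_mul {n : Type*} [Fintype n] (u w u' w' : n → ℂ) :
    vecMulVec u w * vecMulVec u' w' = (∑ k, w k * u' k) • vecMulVec u w' := by
  ext i j
  simp only [mul_apply, vecMulVec_apply, Matrix.smul_apply, smul_eq_mul, Finset.sum_mul, Finset.mul_sum]
  refine Finset.sum_congr rfl fun k _ => by ring

lemma uV_ne_zero (y : EuclideanSpace ℂ (Fin m)) : uV y ≠ 0 := by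
  intro h
  have := congrFun h (Sum.inl ())
  simp [uV] at this

lemma mulVec_uV {n : Type*} [Fintype n] (u w v : n → ℂ) :
    (vecMulVec u w) *ᵥ v = (∑ k, w k * v k) • u := by
  ext i
  simp only [mulVec, dotProduct, vecMulVec_apply, Pi.smul_apply, smul_eq_mul, Finset.sum_mul]
  exact Finset.sum_congr rfl fun k _ => by ring

lemma isUnit_of_sq {n : Type*} [Fintype n] [DecidableEq n] (A : Matrix n n ℂ) (τ z : ℂ)
    (hA : A * A = τ • A) (hz : z ≠ 0) (hzτ : z ≠ τ) :
    IsUnit (z • (1 : Matrix n n ℂ) - A) := by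
  have hzτ' : z - τ ≠ 0 := sub_ne_zero.mpr hzτ
  have hB : True := trivial
  have h1 : (z • (1 : Matrix n n ℂ) - A) * (z⁻¹ • (1 : Matrix n n ℂ) + (z⁻¹ * (z - τ)⁻¹) • A) = 1 := by
    simp only [sub_mul, mul_add, mul_sub, add_mul, smul_mul_assoc, mul_smul_comm, one_mul,
      mul_one, hA, smul_smul]
    match_scalars <;> (field_simp; try ring)
  have h2 : (z⁻¹ • (1 : Matrix n n ℂ) + (z⁻¹ * (z - τ)⁻¹) • A) * (z • (1 : Matrix n n ℂ) - A) = 1 := by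
    simp only [sub_mul, mul_add, mul_sub, add_mul, smul_mul_assoc, mul_smul_comm, one_mul,
      mul_one, hA, smul_smul]
    match_scalars <;> (field_simp; try ring)
  exact ⟨⟨_, _, h1, h2⟩, rfl⟩

end Sr

namespace Sr

lemma spec_rankOne {n : Type*} [Fintype n] [DecidableEq n] (u w : n → ℂ) (hu : u ≠ 0)
    (c : ℂ) (hc : c ≠ 0) (hσ : (∑ k, w k * u k) ≠ 0) :
    {z ∈ spectrum ℂ (c • vecMulVec u w) | z ≠ 0} = {c * ∑ k, w k * u k} := by
  set σ := ∑ k, w k * u k with hσdef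
  set M := vecMulVec u w with hMdef
  have hMM : M * M = σ • M := by rw [hMdef, vecMulVec_mul]
  have hsq : (c • M) * (c • M) = (c * σ) • (c • M) := by
    rw [smul_mul_assoc, mul_smul_comm, hMM, smul_smul, smul_smul, smul_smul]
    ring_nf
  have hmem : (c * σ) ∈ spectrum ℂ (c • M) := by
    rw [spectrum.mem_iff, Algebra.algebraMap_eq_smul_one, Matrix.isUnit_iff_isUnit_det,
      isUnit_iff_ne_zero, not_not, ← Matrix.exists_mulVec_eq_zero_iff]
    refine ⟨u, hu, ?_⟩
    rw [Matrix.sub_mulVec, Matrix.smul_mulVec, Matrix.smul_mulVec,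
      Matrix.one_mulVec, hMdef, mulVec_uV, ← hσdef, smul_smul, sub_self]
  ext z
  simp only [Set.mem_setOf_eq, Set.mem_singleton_iff]
  constructor
  · rintro ⟨hzs, hz0⟩
    by_contra hne
    rw [spectrum.mem_iff, Algebra.algebraMap_eq_smul_one] at hzs
    exact hzs (isUnit_of_sq (c • M) (c * σ) z hsq hz0 hne)
  · rintro rfl
    exact ⟨hmem, mul_ne_zero hc hσ⟩

end Sr

namespace Sr

lemma sum_conj_eq_inner (u v : EuclideanSpace ℂ (Fin m)) :
    ∑ i, conj (u i) * v i = @inner ℂ _ _ u v := by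
  rw [PiLp.inner_apply]
  exact Finset.sum_congr rfl fun i _ => (RCLike.inner_apply' _ _).symm

lemma norm_sum_le (u v : EuclideanSpace ℂ (Fin m)) :
    ‖∑ i, conj (u i) * v i‖ ≤ ‖u‖ * ‖v‖ := by
  rw [sum_conj_eq_inner]; exact norm_inner_le_norm u v

lemma norm_sum_lt {r : ℝ} (hr0 : 0 < r) (u v : EuclideanSpace ℂ (Fin m))
    (hu : ‖u‖ < r) (hv : ‖v‖ < r) : ‖∑ i, conj (u i) * v i‖ < r ^ 2 := by
  calc ‖∑ i, conj (u i) * v i‖ ≤ ‖u‖ * ‖v‖ := norm_sum_le u v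
    _ < r ^ 2 := by
        rw [sq]
        exact mul_lt_mul' (le_of_lt hu) hv (norm_nonneg _) hr0 |>.trans_le le_rfl
  
lemma one_add_lower {r : ℝ} (hr0 : 0 < r) (u v : EuclideanSpace ℂ (Fin m))
    (hu : ‖u‖ < r) (hv : ‖v‖ < r) :
    1 - r ^ 2 ≤ ‖(1 : ℂ) + ∑ i, conj (u i) * v i‖ := by
  have h := norm_sum_lt hr0 u v hu hv
  have h2 : ‖(1:ℂ)‖ ≤ ‖(1:ℂ) + ∑ i, conj (u i) * v i‖ + ‖∑ i, conj (u i) * v i‖ := by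
    calc ‖(1:ℂ)‖ = ‖((1:ℂ) + ∑ i, conj (u i) * v i) - ∑ i, conj (u i) * v i‖ := by
          rw [add_sub_cancel_right]
      _ ≤ _ := norm_sub_le _ _
  have : ‖(1:ℂ)‖ = 1 := norm_one
  linarith

lemma one_add_ne {r : ℝ} (hr0 : 0 < r) (hr1 : r < 1) (u v : EuclideanSpace ℂ (Fin m))
    (hu : ‖u‖ < r) (hv : ‖v‖ < r) :
    (1 : ℂ) + ∑ i, conj (u i) * v i ≠ 0 := by
  intro h
  have := one_add_lower hr0 u v hu hv
  rw [h, norm_zero] at this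
  nlinarith

end Sr

variable {m : ℕ}


lemma sum_conj_eq_inner (u v : EuclideanSpace ℂ (Fin m)) :
    ∑ i, conj (u i) * v i = @inner ℂ _ _ u v := by
  rw [PiLp.inner_apply]
  exact Finset.sum_congr rfl fun i _ => (RCLike.inner_apply' _ _).symm

lemma expand2 (f g h k : Fin m → ℂ) :
    ∑ i, ∑ j, conj (f i * g j - f j * g i) * (h i * k j - h j * k i) =
      (∑ i, conj (f i) * h i) * (∑ j, conj (g j) * k j)
      - (∑ i, conj (f i) * k i) * (∑ j, conj (g j) * h j)
      - (∑ i, conj (g i) * h i) * (∑ j, conj (f j) * k j)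
      + (∑ i, conj (g i) * k i) * (∑ j, conj (f j) * h j) := by
  simp only [Finset.sum_mul_sum]
  rw [← Finset.sum_sub_distrib, ← Finset.sum_sub_distrib, ← Finset.sum_add_distrib]
  refine Finset.sum_congr rfl fun i _ => ?_
  rw [← Finset.sum_sub_distrib, ← Finset.sum_sub_distrib, ← Finset.sum_add_distrib]
  refine Finset.sum_congr rfl fun j _ => ?_
  simp only [map_sub, _root_.map_mul]
  ring

def wdg (f g : EuclideanSpace ℂ (Fin m)) : EuclideanSpace ℂ (Fin m × Fin m) :=
  WithLp.toLp 2 (fun p : Fin m × Fin m => f p.1 * g p.2 - f p.2 * g p.1)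

lemma inner_wdg (f g h k : EuclideanSpace ℂ (Fin m)) :
    @inner ℂ _ _ (wdg f g) (wdg h k) =
      (@inner ℂ _ _ f h) * (@inner ℂ _ _ g k) - (@inner ℂ _ _ f k) * (@inner ℂ _ _ g h)
      - (@inner ℂ _ _ g h) * (@inner ℂ _ _ f k) + (@inner ℂ _ _ g k) * (@inner ℂ _ _ f h) := by
  rw [PiLp.inner_apply]
  simp only [RCLike.inner_apply']
  rw [Fintype.sum_prod_type]
  rw [← sum_conj_eq_inner, ← sum_conj_eq_inner, ← sum_conj_eq_inner, ← sum_conj_eq_inner]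
  exact expand2 f g h k

lemma norm_wdg_sq (f g : EuclideanSpace ℂ (Fin m)) :
    ‖wdg f g‖ ^ 2 = 2 * (‖f‖ ^ 2 * ‖g‖ ^ 2 - ‖@inner ℂ _ _ f g‖ ^ 2) := by
  rw [← @inner_self_eq_norm_sq ℂ, inner_wdg]
  rw [inner_self_eq_norm_sq_to_K, inner_self_eq_norm_sq_to_K,
    show @inner ℂ _ _ g f = conj (@inner ℂ _ _ f g) from (inner_conj_symm _ _).symm,
    RCLike.mul_conj, RCLike.conj_mul]
  norm_cast
  ring

lemma side_bound {r : ℝ} (hr0 : 0 < r) (hr1 : r < 1) (f g : EuclideanSpace ℂ (Fin m))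
    (hf : ‖f‖ < r) (hg : ‖g‖ < r) :
    ‖f - g‖ ^ 2 + (1/2) * ‖wdg f g‖ ^ 2 ≤ (2*r) ^ 2 := by
  rw [norm_sub_sq (𝕜 := ℂ), norm_wdg_sq]
  have h1 := abs_le.mp (RCLike.abs_re_le_norm (@inner ℂ _ _ f g))
  have h2 : ‖@inner ℂ _ _ f g‖ ≤ ‖f‖ * ‖g‖ := norm_inner_le_norm f g
  have h3 : (0:ℝ) ≤ ‖@inner ℂ _ _ f g‖ := norm_nonneg _
  have h4 : (0:ℝ) ≤ ‖f‖ := norm_nonneg f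
  have h5 : (0:ℝ) ≤ ‖g‖ := norm_nonneg g
  have hP1 : ‖f‖ * ‖g‖ ≤ 1 := by nlinarith
  have key : (0:ℝ) ≤ (‖f‖*‖g‖ - ‖@inner ℂ _ _ f g‖) * (2 - ‖f‖*‖g‖ - ‖@inner ℂ _ _ f g‖) := by
    apply mul_nonneg <;> nlinarith
  nlinarith [sq_nonneg (‖f‖ + ‖g‖)]

lemma D_bound {r : ℝ} (hr0 : 0 < r) (hr1 : r < 1) (a b x y : EuclideanSpace ℂ (Fin m))
    (ha : ‖a‖ < r) (hb : ‖b‖ < r) (hx : ‖x‖ < r) (hy : ‖y‖ < r) :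
    ‖(1 + ∑ i, conj (a i) * y i) * (1 + ∑ i, conj (x i) * b i) -
      (1 + ∑ i, conj (a i) * b i) * (1 + ∑ i, conj (x i) * y i)‖ ≤ 4 * r ^ 2 := by
  rw [sum_conj_eq_inner, sum_conj_eq_inner, sum_conj_eq_inner, sum_conj_eq_inner]
  have hD : (1 + @inner ℂ _ _ a y) * (1 + @inner ℂ _ _ x b)
        - (1 + @inner ℂ _ _ a b) * (1 + @inner ℂ _ _ x y)
      = @inner ℂ _ _ (a - x) (y - b) + (1/2) * @inner ℂ _ _ (wdg a x) (wdg y b) := by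
    rw [inner_wdg, inner_sub_left, inner_sub_right, inner_sub_right]
    ring
  rw [hD]
  have step1 : ‖@inner ℂ _ _ (a - x) (y - b) + (1/2) * @inner ℂ _ _ (wdg a x) (wdg y b)‖
      ≤ ‖a - x‖ * ‖y - b‖ + (1/2) * (‖wdg a x‖ * ‖wdg y b‖) := by
    refine (norm_add_le _ _).trans ?_
    have i1 := norm_inner_le_norm (𝕜 := ℂ) (a - x) (y - b)
    have i2 := norm_inner_le_norm (𝕜 := ℂ) (wdg a x) (wdg y b)
    have : ‖(1/2 : ℂ) * @inner ℂ _ _ (wdg a x) (wdg y b)‖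
        = (1/2) * ‖@inner ℂ _ _ (wdg a x) (wdg y b)‖ := by
      rw [norm_mul]; norm_num
    rw [this]
    linarith
  refine step1.trans ?_
  have hU := side_bound hr0 hr1 a x ha hx
  have hV := side_bound hr0 hr1 y b hy hb
  set p1 := ‖a - x‖; set p2 := ‖wdg a x‖; set q1 := ‖y - b‖; set q2 := ‖wdg y b‖
  have hp1 : (0:ℝ) ≤ p1 := norm_nonneg _
  have hp2 : (0:ℝ) ≤ p2 := norm_nonneg _
  have hq1 : (0:ℝ) ≤ q1 := norm_nonneg _
  have hq2 : (0:ℝ) ≤ q2 := norm_nonneg _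
  have hXsq : (p1*q1 + (1/2)*(p2*q2))^2 ≤ (p1^2 + (1/2)*p2^2) * (q1^2 + (1/2)*q2^2) := by
    nlinarith [sq_nonneg (p1*q2 - p2*q1)]
  have h44 : (p1^2 + (1/2)*p2^2) * (q1^2 + (1/2)*q2^2) ≤ ((2*r)^2)^2 := by
    have : (0:ℝ) ≤ q1^2 + (1/2)*q2^2 := by positivity
    nlinarith
  have hfin : (p1*q1 + (1/2)*(p2*q2))^2 ≤ (4*r^2)^2 := by nlinarith
  have := le_of_pow_le_pow_left₀ (n := 2) (by norm_num) (by positivity : (0:ℝ) ≤ 4*r^2) hfin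
  linarith

end
end Aux

open Finset in
/-- For `A = λ[[1,a*],[b,ba*]]` and `B = μ[[1,x*],[y,yx*]]` in `𝒮_r` with
`λ, μ ≠ 0`: the unique nonzero eigenvalue of `A` is `α = λ(1 + a*b)`, that of `B`
is `β = μ(1 + x*y)`, that of `AB` is `γ = λμ(1 + a*y)(1 + x*b)`, and
`|γ - αβ| ≤ (4r²/(1-r²)²)·|α|·|β|`. -/
theorem srSet_eigenvalues_and_estimate (m : ℕ) (hm : 0 < m) (r : ℝ) (hr0 : 0 < r)
    (hr1 : r < 1) (a b x y : EuclideanSpace ℂ (Fin m))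
    (ha : ‖a‖ < r) (hb : ‖b‖ < r) (hx : ‖x‖ < r) (hy : ‖y‖ < r)
    (lam mu : ℂ) (hlam : lam ≠ 0) (hmu : mu ≠ 0) :
    {z ∈ spectrum ℂ (lam • srMat m a b) | z ≠ 0} =
        {lam * (1 + ∑ i, (starRingEnd ℂ) (a i) * b i)} ∧
      {z ∈ spectrum ℂ (mu • srMat m x y) | z ≠ 0} =
        {mu * (1 + ∑ i, (starRingEnd ℂ) (x i) * y i)} ∧
      {z ∈ spectrum ℂ (lam • srMat m a b * mu • srMat m x y) | z ≠ 0} =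
        {lam * mu * (1 + ∑ i, (starRingEnd ℂ) (a i) * y i) *
          (1 + ∑ i, (starRingEnd ℂ) (x i) * b i)} ∧
      ‖(lam * mu * (1 + ∑ i, (starRingEnd ℂ) (a i) * y i) *
              (1 + ∑ i, (starRingEnd ℂ) (x i) * b i) -
            lam * (1 + ∑ i, (starRingEnd ℂ) (a i) * b i) *
              (mu * (1 + ∑ i, (starRingEnd ℂ) (x i) * y i)))‖ ≤
        4 * r ^ 2 / (1 - r ^ 2) ^ 2 *
          (‖lam * (1 + ∑ i, (starRingEnd ℂ) (a i) * b i)‖ *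
            ‖mu * (1 + ∑ i, (starRingEnd ℂ) (x i) * y i)‖) := by
  have hab := Sr.one_add_ne hr0 hr1 a b ha hb
  have hxy := Sr.one_add_ne hr0 hr1 x y hx hy
  have hay := Sr.one_add_ne hr0 hr1 a y ha hy
  have hxb := Sr.one_add_ne hr0 hr1 x b hx hb
  refine ⟨?_, ?_, ?_, ?_⟩
  · rw [Sr.srMat_eq]
    have h := Sr.spec_rankOne (Sr.uV b) (Sr.wV a) (Sr.uV_ne_zero b) lam hlam
      (by rw [Sr.dot_eq]; exact hab)
    rwa [Sr.dot_eq] at h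
  · rw [Sr.srMat_eq]
    have h := Sr.spec_rankOne (Sr.uV y) (Sr.wV x) (Sr.uV_ne_zero y) mu hmu
      (by rw [Sr.dot_eq]; exact hxy)
    rwa [Sr.dot_eq] at h
  · have hprod : (lam • srMat m a b) * (mu • srMat m x y)
        = (lam * mu * (1 + ∑ i, (starRingEnd ℂ) (a i) * y i)) •
            vecMulVec (Sr.uV b) (Sr.wV x) := by
      rw [Sr.srMat_eq, Sr.srMat_eq, smul_mul_assoc, mul_smul_comm, Sr.vecMulVec_mul,
        Sr.dot_eq, smul_smul, smul_smul]
    rw [hprod]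
    have h := Sr.spec_rankOne (Sr.uV b) (Sr.wV x) (Sr.uV_ne_zero b)
      (lam * mu * (1 + ∑ i, (starRingEnd ℂ) (a i) * y i))
      (mul_ne_zero (mul_ne_zero hlam hmu) hay)
      (by rw [Sr.dot_eq]; exact hxb)
    rwa [Sr.dot_eq] at h
  · have hDb := D_bound hr0 hr1 a b x y ha hb hx hy
    have hS := Sr.one_add_lower hr0 a b ha hb
    have hT := Sr.one_add_lower hr0 x y hx hy
    rw [show lam * mu * (1 + ∑ i, (starRingEnd ℂ) (a i) * y i) *
          (1 + ∑ i, (starRingEnd ℂ) (x i) * b i) -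
        lam * (1 + ∑ i, (starRingEnd ℂ) (a i) * b i) *
          (mu * (1 + ∑ i, (starRingEnd ℂ) (x i) * y i))
      = (lam * mu) * ((1 + ∑ i, (starRingEnd ℂ) (a i) * y i) *
          (1 + ∑ i, (starRingEnd ℂ) (x i) * b i) -
        (1 + ∑ i, (starRingEnd ℂ) (a i) * b i) *
          (1 + ∑ i, (starRingEnd ℂ) (x i) * y i)) from by ring]
    rw [norm_mul, norm_mul, norm_mul, norm_mul]
    rw [div_mul_eq_mul_div, le_div_iff₀ (pow_pos (by nlinarith : (0:ℝ) < 1 - r^2) 2)]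
    have h1 : (1 - r^2) * (1 - r^2)
        ≤ ‖(1:ℂ) + ∑ i, (starRingEnd ℂ) (a i) * b i‖ *
          ‖(1:ℂ) + ∑ i, (starRingEnd ℂ) (x i) * y i‖ :=
      mul_le_mul hS hT (by nlinarith) (norm_nonneg _)
    have hmain : ‖(1 + ∑ i, (starRingEnd ℂ) (a i) * y i) *
          (1 + ∑ i, (starRingEnd ℂ) (x i) * b i) -
        (1 + ∑ i, (starRingEnd ℂ) (a i) * b i) *
          (1 + ∑ i, (starRingEnd ℂ) (x i) * y i)‖ * ((1 - r^2) * (1 - r^2))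
        ≤ 4 * r^2 * (‖(1:ℂ) + ∑ i, (starRingEnd ℂ) (a i) * b i‖ *
          ‖(1:ℂ) + ∑ i, (starRingEnd ℂ) (x i) * y i‖) :=
      mul_le_mul hDb h1 (by nlinarith) (by positivity)
    have hlm : (0:ℝ) ≤ ‖lam‖ * ‖mu‖ := mul_nonneg (norm_nonneg _) (norm_nonneg _)
    nlinarith [mul_le_mul_of_nonneg_left hmain hlm]
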